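/- For every antichain Γ in the poset Δ⁺ of positive roots of type A_n, one has 𝔛(Γ)* = 𝔛⁻¹(Γ*); equivalently, 𝔛(𝔛(Γ)*) = Γ*, i.e., 𝔛⁻¹ = ∗ ∘ 𝔛 ∘ ∗ where ∗ is the duality map on antichains. -/

import Mathlib

open Finset

/-- The root order on pairs: `(i,j) ≼ (i',j')` iff `i' ≤ i` and `j ≤ j'`. -/
def rle (p q : ℕ × ℕ) : Prop := q.1 ≤ p.1 ∧ p.2 ≤ q.2

instance : DecidableRel rle := fun p q =>
  inferInstanceAs (Decidable (q.1 ≤ p.1 ∧ p.2 ≤ q.2))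

/-- The positive roots of type `A_n`, modelled as pairs `(i,j)` with `1 ≤ i ≤ j ≤ n`. -/
def roots (n : ℕ) : Finset (ℕ × ℕ) :=
  ((Finset.Icc 1 n) ×ˢ (Finset.Icc 1 n)).filter (fun p => p.1 ≤ p.2)

/-- `Γ` is an antichain in `Δ⁺(A_n)`: a set of pairwise incomparable positive roots. -/
def IsAC (n : ℕ) (Γ : Finset (ℕ × ℕ)) : Prop :=
  Γ ⊆ roots n ∧ ∀ p ∈ Γ, ∀ q ∈ Γ, rle p q → p = q

/-- The upper ideal `I(Γ) = {x ∈ Δ⁺ : ∃ γ ∈ Γ, γ ≼ x}` generated by `Γ`. -/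
def upIdeal (n : ℕ) (Γ : Finset (ℕ × ℕ)) : Finset (ℕ × ℕ) :=
  (roots n).filter (fun x => ∃ γ ∈ Γ, rle γ x)

/-- The set of maximal elements of `S` with respect to the root order. -/
def maxOf (S : Finset (ℕ × ℕ)) : Finset (ℕ × ℕ) :=
  S.filter (fun x => ∀ y ∈ S, rle x y → y = x)

/-- The set of minimal elements of `S` with respect to the root order. -/
def minOf (S : Finset (ℕ × ℕ)) : Finset (ℕ × ℕ) :=
  S.filter (fun x => ∀ y ∈ S, rle y x → y = x)

/-- The reverse operator `𝔛`, sending an antichain `Γ` to the set of maximal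
elements of `Δ⁺ \ I(Γ)`. -/
def Xrev (n : ℕ) (Γ : Finset (ℕ × ℕ)) : Finset (ℕ × ℕ) :=
  maxOf (roots n \ upIdeal n Γ)

/-- `r_Γ(γ) = #(I(Γ) \ {γ})_min − #I(Γ)_min + 1`. -/
def rGam (n : ℕ) (Γ : Finset (ℕ × ℕ)) (γ : ℕ × ℕ) : ℤ :=
  ((minOf (upIdeal n Γ \ {γ})).card : ℤ) - ((minOf (upIdeal n Γ)).card : ℤ) + 1

/-- The OY-number `𝒴(Γ) = Σ_{γ ∈ Γ} r_Γ(γ)`; in particular `𝒴(∅) = 0`. -/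
def OY (n : ℕ) (Γ : Finset (ℕ × ℕ)) : ℤ := ∑ γ ∈ Γ, rGam n Γ γ

/-- The dual antichain `Γ*`: if `Γ` has first coordinates `𝐢` and second
coordinates `𝐣`, then `Γ*` pairs the elements of `[n] \ 𝐣` (listed increasingly,
as first coordinates) with the elements of `[n] \ 𝐢` (listed increasingly,
as second coordinates). -/
def dualAC (n : ℕ) (Γ : Finset (ℕ × ℕ)) : Finset (ℕ × ℕ) :=
  let iStar := ((Finset.Icc 1 n) \ (Γ.image Prod.snd)).sort (· ≤ ·)
  let jStar := ((Finset.Icc 1 n) \ (Γ.image Prod.fst)).sort (· ≤ ·)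
  (Finset.range iStar.length).image (fun t => (iStar.getD t 0, jStar.getD t 0))


def rk (F : Finset ℕ) (x : ℕ) : ℕ := (F.filter (· < x)).card
def nth (F : Finset ℕ) (t : ℕ) : ℕ := (F.sort (· ≤ ·)).getD t 0

lemma list_filter_lt_self (a : ℕ) (l : List ℕ) (ha : ∀ b ∈ l, a < b) :
    (List.filter (fun y => decide (y < a)) (a :: l)).length = 0 := by
  rw [List.filter_eq_nil_iff.mpr]
  · rfl
  · intro y hy
    rcases List.mem_cons.mp hy with rfl | hy
    · simp
    · have := ha y hy; simp; omega

lemma list_filter_getD (l : List ℕ) (hl : l.Pairwise (· < ·)) :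
    ∀ t, t < l.length → (l.filter (fun y => y < l.getD t 0)).length = t := by
  induction l with
  | nil => intro t ht; simp at ht
  | cons a l ih =>
    intro t ht
    rcases List.pairwise_cons.mp hl with ⟨ha, hl'⟩
    cases t with
    | zero =>
      simp only [List.getD_cons_zero]
      exact list_filter_lt_self a l ha
    | succ t =>
      simp only [List.getD_cons_succ]
      have htl : t < l.length := by simpa using ht
      have hmem : l.getD t 0 ∈ l := by
        rw [List.getD_eq_getElem l 0 htl]; exact List.getElem_mem _
      have halt : a < l.getD t 0 := ha _ hmem
      rw [List.filter_cons, if_pos (by simpa using halt)]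
      have := ih hl' t htl
      simp only [List.length_cons]
      omega
      

lemma list_getD_filter (l : List ℕ) (hl : l.Pairwise (· < ·)) :
    ∀ x, x ∈ l → l.getD (l.filter (fun y => y < x)).length 0 = x := by
  induction l with
  | nil => intro x hx; simp at hx
  | cons a l ih =>
    intro x hx
    rcases List.pairwise_cons.mp hl with ⟨ha, hl'⟩
    rcases List.mem_cons.mp hx with h | hx
    · subst h
      rw [show (List.filter (fun y => decide (y < x)) (x :: l)).length = 0 from
        list_filter_lt_self x l ha]
      rfl
    · have halt : a < x := ha x hx
      rw [List.filter_cons, if_pos (by simpa using halt)]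
      simp only [List.length_cons, List.getD_cons_succ]
      exact ih hl' x hx

-- Finset versions
lemma rk_eq_sort (F : Finset ℕ) (x : ℕ) :
    rk F x = ((F.sort (· ≤ ·)).filter (fun y => y < x)).length := by
  have h0 : rk F x = Multiset.card (Multiset.filter (· < x) F.1) := rfl
  rw [h0, ← Finset.sort_eq F (· ≤ ·), Multiset.filter_coe, Multiset.coe_card]

lemma nth_rk (F : Finset ℕ) (x : ℕ) (hx : x ∈ F) : nth F (rk F x) = x := by
  rw [nth, rk_eq_sort]
  exact list_getD_filter _ (Finset.sortedLT_sort F).pairwise x ((Finset.mem_sort _).mpr hx)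

lemma nth_mem (F : Finset ℕ) (t : ℕ) (ht : t < F.card) : nth F t ∈ F := by
  have hlen : t < (F.sort (· ≤ ·)).length := by rwa [Finset.length_sort]
  rw [← Finset.mem_sort (· ≤ ·), nth]
  rw [List.getD_eq_getElem _ 0 hlen]
  exact List.getElem_mem _

lemma rk_nth (F : Finset ℕ) (t : ℕ) (ht : t < F.card) : rk F (nth F t) = t := by
  rw [rk_eq_sort, nth]
  exact list_filter_getD _ (Finset.sortedLT_sort F).pairwise t (by rwa [Finset.length_sort])

lemma rk_mono (F : Finset ℕ) {p q : ℕ} (h : p ≤ q) : rk F p ≤ rk F q :=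
  Finset.card_le_card (fun y hy => by
    simp only [Finset.mem_filter] at *; exact ⟨hy.1, by omega⟩)

lemma rk_lt_of_mem (F : Finset ℕ) {x q : ℕ} (hx : x ∈ F) (hq : x < q) :
    rk F x < rk F q := by
  have : insert x (F.filter (· < x)) ⊆ F.filter (· < q) := by
    intro y hy
    rcases Finset.mem_insert.mp hy with rfl | hy
    · exact Finset.mem_filter.mpr ⟨hx, hq⟩
    · rcases Finset.mem_filter.mp hy with ⟨h1, h2⟩
      exact Finset.mem_filter.mpr ⟨h1, by omega⟩
  have hcard := Finset.card_le_card this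
  rwa [Finset.card_insert_of_notMem (by simp)] at hcard

lemma rk_le_card (F : Finset ℕ) (x : ℕ) : rk F x ≤ F.card :=
  Finset.card_le_card (Finset.filter_subset _ _)

lemma rk_lt_card_of_mem (F : Finset ℕ) {x : ℕ} (hx : x ∈ F) : rk F x < F.card := by
  have : rk F x < rk F (x+1) := rk_lt_of_mem F hx (by omega)
  have := rk_le_card F (x+1)
  omega

lemma rk_subset {F G : Finset ℕ} (h : F ⊆ G) (x : ℕ) : rk F x ≤ rk G x :=
  Finset.card_le_card (Finset.filter_subset_filter _ h)

-- T8
lemma nth_le_iff (F : Finset ℕ) {t : ℕ} (ht : t < F.card) (c : ℕ) :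
    nth F t ≤ c ↔ t < rk F (c+1) := by
  constructor
  · intro h
    have := rk_lt_of_mem F (nth_mem F t ht) (show nth F t < c + 1 by omega)
    rwa [rk_nth F t ht] at this
  · intro h
    by_contra hc
    have : rk F (c+1) ≤ rk F (nth F t) := rk_mono F (by omega)
    rw [rk_nth F t ht] at this
    omega

lemma nth_strictmono (F : Finset ℕ) {t t' : ℕ} (h : t < t') (ht' : t' < F.card) :
    nth F t < nth F t' := by
  by_contra hc
  have h1 : rk F (nth F t') ≤ rk F (nth F t) := rk_mono F (by omega)
  rw [rk_nth F t' ht', rk_nth F t (by omega)] at h1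
  omega

-- complement rank
lemma rk_Icc (n x : ℕ) (hx : x ≤ n + 1) : rk (Icc 1 n) x = x - 1 := by
  rw [rk]
  have : (Icc 1 n).filter (· < x) = Icc 1 (x-1) := by
    ext y; simp only [Finset.mem_filter, Finset.mem_Icc]; omega
  rw [this, Nat.card_Icc]; omega

lemma rk_compl (n : ℕ) {F : Finset ℕ} (hF : F ⊆ Icc 1 n) (x : ℕ) (hx : x ≤ n + 1) :
    rk (Icc 1 n \ F) x + rk F x = x - 1 := by
  have h1 : (Icc 1 n \ F).filter (· < x) = (Icc 1 n).filter (· < x) \ F.filter (· < x) := by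
    ext y; simp only [Finset.mem_filter, Finset.mem_sdiff]; tauto
  have h2 : F.filter (· < x) ⊆ (Icc 1 n).filter (· < x) :=
    Finset.filter_subset_filter _ hF
  rw [rk, rk, h1, Finset.card_sdiff_of_subset (by exact Finset.filter_subset_filter _ hF)]
  have h3 := Finset.card_le_card h2
  have h4 : ((Icc 1 n).filter (· < x)).card = x - 1 := rk_Icc n x hx
  omega

-- gap lemma
lemma gap_lemma (f : ℕ → ℕ) (u v : ℕ) (h : u ≤ v)
    (hs : ∀ w, u ≤ w → w < v → f w < f (w+1)) : f u + (v - u) ≤ f v := by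
  induction v with
  | zero =>
    have : u = 0 := by omega
    subst this; simp
  | succ v ih =>
    rcases Nat.lt_or_ge u (v+1) with h1 | h1
    · have h2 : u ≤ v := by omega
      have := ih h2 (fun w hw hwv => hs w hw (by omega))
      have := hs v h2 (by omega)
      omega
    · have : u = v + 1 := by omega
      subst this; simp
-- basic facts
lemma rle_refl (p : ℕ × ℕ) : rle p p := ⟨le_refl _, le_refl _⟩

lemma rle_trans {p q r : ℕ × ℕ} (h1 : rle p q) (h2 : rle q r) : rle p r :=
  ⟨le_trans h2.1 h1.1, le_trans h1.2 h2.2⟩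

lemma rle_antisymm {p q : ℕ × ℕ} (h1 : rle p q) (h2 : rle q p) : p = q := by
  rcases h1 with ⟨a, b⟩; rcases h2 with ⟨c, d⟩
  exact Prod.ext (by omega) (by omega)

lemma mem_roots {n : ℕ} {w : ℕ × ℕ} :
    w ∈ roots n ↔ 1 ≤ w.1 ∧ w.1 ≤ w.2 ∧ w.2 ≤ n := by
  simp only [roots, Finset.mem_filter, Finset.mem_product, Finset.mem_Icc]
  omega

-- injectivity of coordinates on an antichain
lemma fst_injOn {n : ℕ} {Γ : Finset (ℕ × ℕ)} (hΓ : IsAC n Γ) :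
    ∀ γ ∈ Γ, ∀ γ' ∈ Γ, γ.1 = γ'.1 → γ = γ' := by
  intro γ hγ γ' hγ' h
  rcases le_total γ.2 γ'.2 with h2 | h2
  · exact hΓ.2 γ hγ γ' hγ' ⟨h.ge, h2⟩
  · exact (hΓ.2 γ' hγ' γ hγ ⟨h.le, h2⟩).symm

lemma snd_injOn {n : ℕ} {Γ : Finset (ℕ × ℕ)} (hΓ : IsAC n Γ) :
    ∀ γ ∈ Γ, ∀ γ' ∈ Γ, γ.2 = γ'.2 → γ = γ' := by
  intro γ hγ γ' hγ' h
  rcases le_total γ.1 γ'.1 with h1 | h1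
  · exact (hΓ.2 γ' hγ' γ hγ ⟨h1, h.ge⟩).symm
  · exact hΓ.2 γ hγ γ' hγ' ⟨h1, h.le⟩

lemma card_image_fst {n : ℕ} {Γ : Finset (ℕ × ℕ)} (hΓ : IsAC n Γ) :
    (Γ.image Prod.fst).card = Γ.card :=
  Finset.card_image_of_injOn (fun γ hγ γ' hγ' h => fst_injOn hΓ γ hγ γ' hγ' h)

lemma card_image_snd {n : ℕ} {Γ : Finset (ℕ × ℕ)} (hΓ : IsAC n Γ) :
    (Γ.image Prod.snd).card = Γ.card :=
  Finset.card_image_of_injOn (fun γ hγ γ' hγ' h => snd_injOn hΓ γ hγ γ' hγ' h)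

lemma image_fst_subset {n : ℕ} {Γ : Finset (ℕ × ℕ)} (hΓ : IsAC n Γ) :
    Γ.image Prod.fst ⊆ Icc 1 n := by
  intro x hx
  rcases Finset.mem_image.mp hx with ⟨γ, hγ, rfl⟩
  have := mem_roots.mp (hΓ.1 hγ)
  simp only [Finset.mem_Icc]; omega

lemma image_snd_subset {n : ℕ} {Γ : Finset (ℕ × ℕ)} (hΓ : IsAC n Γ) :
    Γ.image Prod.snd ⊆ Icc 1 n := by
  intro x hx
  rcases Finset.mem_image.mp hx with ⟨γ, hγ, rfl⟩
  have := mem_roots.mp (hΓ.1 hγ)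
  simp only [Finset.mem_Icc]; omega

lemma card_compl_eq {n : ℕ} {Γ : Finset (ℕ × ℕ)} (hΓ : IsAC n Γ) :
    (Icc 1 n \ Γ.image Prod.snd).card = (Icc 1 n \ Γ.image Prod.fst).card := by
  rw [Finset.card_sdiff_of_subset (image_snd_subset hΓ), Finset.card_sdiff_of_subset (image_fst_subset hΓ),
    card_image_fst hΓ, card_image_snd hΓ]

-- rank transfer through images
lemma rk_image_snd {n : ℕ} {Γ : Finset (ℕ × ℕ)} (hΓ : IsAC n Γ) (y : ℕ) :
    rk (Γ.image Prod.snd) y = (Γ.filter (fun γ => γ.2 < y)).card := by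
  rw [rk, Finset.filter_image]
  exact Finset.card_image_of_injOn (fun γ hγ γ' hγ' h =>
    snd_injOn hΓ γ (Finset.mem_filter.mp hγ).1 γ' (Finset.mem_filter.mp hγ').1 h)

lemma rk_image_fst {n : ℕ} {Γ : Finset (ℕ × ℕ)} (hΓ : IsAC n Γ) (y : ℕ) :
    rk (Γ.image Prod.fst) y = (Γ.filter (fun γ => γ.1 < y)).card := by
  rw [rk, Finset.filter_image]
  exact Finset.card_image_of_injOn (fun γ hγ γ' hγ' h =>
    fst_injOn hΓ γ (Finset.mem_filter.mp hγ).1 γ' (Finset.mem_filter.mp hγ').1 h)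

lemma rk_snd_le_fst {n : ℕ} {Γ : Finset (ℕ × ℕ)} (hΓ : IsAC n Γ) (y : ℕ) :
    rk (Γ.image Prod.snd) y ≤ rk (Γ.image Prod.fst) y := by
  rw [rk_image_snd hΓ, rk_image_fst hΓ]
  apply Finset.card_le_card
  intro γ hγ
  rcases Finset.mem_filter.mp hγ with ⟨h1, h2⟩
  have := mem_roots.mp (hΓ.1 h1)
  exact Finset.mem_filter.mpr ⟨h1, by omega⟩

-- dual membership characterization
lemma mem_dualAC {n : ℕ} {Γ : Finset (ℕ × ℕ)}
    (hc : (Icc 1 n \ Γ.image Prod.snd).card = (Icc 1 n \ Γ.image Prod.fst).card)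
    (w : ℕ × ℕ) :
    w ∈ dualAC n Γ ↔
      w.1 ∈ Icc 1 n \ Γ.image Prod.snd ∧ w.2 ∈ Icc 1 n \ Γ.image Prod.fst ∧
      rk (Icc 1 n \ Γ.image Prod.snd) w.1 = rk (Icc 1 n \ Γ.image Prod.fst) w.2 := by
  rw [dualAC]
  simp only [Finset.mem_image, Finset.mem_range, Finset.length_sort]
  constructor
  · rintro ⟨t, ht, rfl⟩
    have ht' : t < (Icc 1 n \ Γ.image Prod.fst).card := by omega
    refine ⟨nth_mem _ t ht, nth_mem _ t ht', ?_⟩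
    show rk _ (nth _ t) = rk _ (nth _ t)
    rw [rk_nth _ t ht, rk_nth _ t ht']
  · rintro ⟨h1, h2, h3⟩
    refine ⟨rk (Icc 1 n \ Γ.image Prod.snd) w.1, rk_lt_card_of_mem _ h1, ?_⟩
    have e1 : nth (Icc 1 n \ Γ.image Prod.snd) (rk (Icc 1 n \ Γ.image Prod.snd) w.1) = w.1 :=
      nth_rk _ w.1 h1
    have e2 : nth (Icc 1 n \ Γ.image Prod.fst) (rk (Icc 1 n \ Γ.image Prod.fst) w.2) = w.2 :=
      nth_rk _ w.2 h2
    rw [← h3] at e2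
    exact Prod.ext e1 e2

-- the dual of an antichain is an antichain
lemma dual_isAC {n : ℕ} {Γ : Finset (ℕ × ℕ)} (hΓ : IsAC n Γ) : IsAC n (dualAC n Γ) := by
  have hc := card_compl_eq hΓ
  have hXY : ∀ x, x ≤ n + 1 →
      rk (Icc 1 n \ Γ.image Prod.fst) x ≤ rk (Icc 1 n \ Γ.image Prod.snd) x := by
    intro x hx
    have h1 := rk_compl n (image_fst_subset hΓ) x hx
    have h2 := rk_compl n (image_snd_subset hΓ) x hx
    have h3 := rk_snd_le_fst hΓ x
    omega
  constructor
  · intro w hw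
    rcases (mem_dualAC hc w).mp hw with ⟨h1, h2, h3⟩
    rcases Finset.mem_sdiff.mp h1 with ⟨h1a, _⟩
    rcases Finset.mem_sdiff.mp h2 with ⟨h2a, _⟩
    rcases Finset.mem_Icc.mp h1a with ⟨h1b, h1c⟩
    rcases Finset.mem_Icc.mp h2a with ⟨h2b, h2c⟩
    rw [mem_roots]
    refine ⟨h1b, ?_, h2c⟩
    -- w.1 ≤ w.2
    by_contra hlt
    push_neg at hlt
    have e1 : rk (Icc 1 n \ Γ.image Prod.snd) (w.2 + 1) ≤
        rk (Icc 1 n \ Γ.image Prod.snd) w.1 := rk_mono _ (by omega)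
    have e2 := hXY (w.2 + 1) (by omega)
    have e3 := rk_lt_of_mem (Icc 1 n \ Γ.image Prod.fst) h2 (show w.2 < w.2 + 1 by omega)
    omega
  · intro p hp q hq hpq
    rcases (mem_dualAC hc p).mp hp with ⟨h1, h2, h3⟩
    rcases (mem_dualAC hc q).mp hq with ⟨g1, g2, g3⟩
    rcases hpq with ⟨ha, hb⟩
    have e1 : rk (Icc 1 n \ Γ.image Prod.snd) q.1 ≤ rk (Icc 1 n \ Γ.image Prod.snd) p.1 :=
      rk_mono _ ha
    have e2 : rk (Icc 1 n \ Γ.image Prod.fst) p.2 ≤ rk (Icc 1 n \ Γ.image Prod.fst) q.2 :=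
      rk_mono _ hb
    have e3 : rk (Icc 1 n \ Γ.image Prod.snd) p.1 = rk (Icc 1 n \ Γ.image Prod.snd) q.1 := by
      omega
    have e4 : rk (Icc 1 n \ Γ.image Prod.fst) p.2 = rk (Icc 1 n \ Γ.image Prod.fst) q.2 := by
      omega
    have f1 : p.1 = q.1 := by
      calc p.1 = nth (Icc 1 n \ Γ.image Prod.snd) (rk (Icc 1 n \ Γ.image Prod.snd) p.1) :=
            (nth_rk _ p.1 h1).symm
        _ = nth (Icc 1 n \ Γ.image Prod.snd) (rk (Icc 1 n \ Γ.image Prod.snd) q.1) := by rw [e3]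
        _ = q.1 := nth_rk _ q.1 g1
    have f2 : p.2 = q.2 := by
      calc p.2 = nth (Icc 1 n \ Γ.image Prod.fst) (rk (Icc 1 n \ Γ.image Prod.fst) p.2) :=
            (nth_rk _ p.2 h2).symm
        _ = nth (Icc 1 n \ Γ.image Prod.fst) (rk (Icc 1 n \ Γ.image Prod.fst) q.2) := by rw [e4]
        _ = q.2 := nth_rk _ q.2 g2
    exact Prod.ext f1 f2

-- P1 : pairing existence lemma (up-ideal side)
lemma exists_pair_up {X Y : Finset ℕ} (hc : X.card = Y.card) {S : Finset (ℕ × ℕ)}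
    (hmem : ∀ w, w ∈ S ↔ w.1 ∈ X ∧ w.2 ∈ Y ∧ rk X w.1 = rk Y w.2) (p q : ℕ) :
    (∃ w ∈ S, p ≤ w.1 ∧ w.2 ≤ q) ↔ rk X p < rk Y (q + 1) := by
  constructor
  · rintro ⟨w, hw, h1, h2⟩
    rcases (hmem w).mp hw with ⟨m1, m2, m3⟩
    have e1 : rk X p ≤ rk X w.1 := rk_mono _ h1
    have e2 : rk Y w.2 < rk Y (q + 1) := rk_lt_of_mem _ m2 (by omega)
    omega
  · intro h
    have h1 : 1 ≤ rk Y (q + 1) := by omega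
    set t := rk Y (q + 1) - 1 with htdef
    have ht : t < Y.card := by
      have := rk_le_card Y (q + 1)
      omega
    have htX : t < X.card := by omega
    refine ⟨(nth X t, nth Y t), (hmem _).mpr ⟨nth_mem X t htX, nth_mem Y t ht, ?_⟩, ?_, ?_⟩
    · rw [rk_nth X t htX, rk_nth Y t ht]
    · -- p ≤ nth X t
      show p ≤ nth X t
      by_contra hcon
      push_neg at hcon
      have := rk_lt_of_mem X (nth_mem X t htX) hcon
      rw [rk_nth X t htX] at this
      omega
    · -- nth Y t ≤ q
      show nth Y t ≤ q
      by_contra hcon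
      push_neg at hcon
      have : rk Y (q + 1) ≤ rk Y (nth Y t) := rk_mono _ (by omega)
      rw [rk_nth Y t ht] at this
      omega

-- P2 : pairing existence lemma (down-ideal side)
lemma exists_pair_down {X Y : Finset ℕ} (hc : X.card = Y.card) {S : Finset (ℕ × ℕ)}
    (hmem : ∀ w, w ∈ S ↔ w.1 ∈ X ∧ w.2 ∈ Y ∧ rk X w.1 = rk Y w.2) (p q : ℕ) :
    (∃ w ∈ S, w.1 ≤ p ∧ q ≤ w.2) ↔ rk Y q < rk X (p + 1) := by
  constructor
  · rintro ⟨w, hw, h1, h2⟩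
    rcases (hmem w).mp hw with ⟨m1, m2, m3⟩
    have e1 : rk Y q ≤ rk Y w.2 := rk_mono _ h2
    have e2 : rk X w.1 < rk X (p + 1) := rk_lt_of_mem _ m1 (by omega)
    omega
  · intro h
    have h1 : 1 ≤ rk X (p + 1) := by omega
    set t := rk X (p + 1) - 1 with htdef
    have ht : t < X.card := by
      have := rk_le_card X (p + 1)
      omega
    have htY : t < Y.card := by omega
    refine ⟨(nth X t, nth Y t), (hmem _).mpr ⟨nth_mem X t ht, nth_mem Y t htY, ?_⟩, ?_, ?_⟩
    · rw [rk_nth X t ht, rk_nth Y t htY]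
    · show nth X t ≤ p
      by_contra hcon
      push_neg at hcon
      have : rk X (p + 1) ≤ rk X (nth X t) := rk_mono _ (by omega)
      rw [rk_nth X t ht] at this
      omega
    · show q ≤ nth Y t
      by_contra hcon
      push_neg at hcon
      have := rk_lt_of_mem Y (nth_mem Y t htY) hcon
      rw [rk_nth Y t htY] at this
      omega

-- the complement-of-up-ideal predicate
def CC (n : ℕ) (Γ : Finset (ℕ × ℕ)) (w : ℕ × ℕ) : Prop :=
  w ∈ roots n ∧ ∀ γ ∈ Γ, ¬ rle γ w

lemma mem_compl_upIdeal {n : ℕ} {Γ : Finset (ℕ × ℕ)} (w : ℕ × ℕ) :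
    w ∈ roots n \ upIdeal n Γ ↔ CC n Γ w := by
  simp only [Finset.mem_sdiff, upIdeal, Finset.mem_filter, CC, not_and, not_exists]
  constructor
  · rintro ⟨h1, h2⟩
    exact ⟨h1, fun γ hγ hr => (h2 h1) γ hγ hr⟩
  · rintro ⟨h1, h2⟩
    exact ⟨h1, fun _ => fun γ hγ hr => h2 γ hγ hr⟩

lemma CC_down {n : ℕ} {Γ : Finset (ℕ × ℕ)} {p q : ℕ × ℕ} (hq : CC n Γ q)
    (hp : p ∈ roots n) (hpq : rle p q) : CC n Γ p :=
  ⟨hp, fun γ hγ hr => hq.2 γ hγ (rle_trans hr hpq)⟩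

-- cover characterization of membership in Xrev
lemma mem_xrev_iff {n : ℕ} {Γ : Finset (ℕ × ℕ)} (w : ℕ × ℕ) :
    w ∈ Xrev n Γ ↔ CC n Γ w ∧ ¬ CC n Γ (w.1 - 1, w.2) ∧ ¬ CC n Γ (w.1, w.2 + 1) := by
  rw [Xrev, maxOf, Finset.mem_filter]
  constructor
  · rintro ⟨hw, hmax⟩
    have hC : CC n Γ w := (mem_compl_upIdeal w).mp hw
    have hw1 : 1 ≤ w.1 := (mem_roots.mp hC.1).1
    refine ⟨hC, ?_, ?_⟩
    · intro hC1
      have h1 : (w.1 - 1, w.2) ∈ roots n \ upIdeal n Γ := (mem_compl_upIdeal _).mpr hC1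
      have := hmax _ h1 ⟨Nat.sub_le w.1 1, le_refl w.2⟩
      have : w.1 - 1 = w.1 := congrArg Prod.fst this
      omega
    · intro hC2
      have h1 : (w.1, w.2 + 1) ∈ roots n \ upIdeal n Γ := (mem_compl_upIdeal _).mpr hC2
      have := hmax _ h1 ⟨le_refl w.1, Nat.le_succ w.2⟩
      have : w.2 + 1 = w.2 := congrArg Prod.snd this
      omega
  · rintro ⟨hC, h1, h2⟩
    have hrw := mem_roots.mp hC.1
    refine ⟨(mem_compl_upIdeal w).mpr hC, ?_⟩
    intro y hy hle
    have hCy : CC n Γ y := (mem_compl_upIdeal y).mp hy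
    have hry := mem_roots.mp hCy.1
    rcases hle with ⟨ha, hb⟩
    by_cases hu : y.1 < w.1
    · exfalso
      apply h1
      apply CC_down hCy
      · rw [mem_roots]; simp; omega
      · exact ⟨by simp; omega, by simp; omega⟩
    · by_cases hv : w.2 < y.2
      · exfalso
        apply h2
        apply CC_down hCy
        · rw [mem_roots]; simp; omega
        · exact ⟨by simp; omega, by simp; omega⟩
      · exact Prod.ext (by omega) (by omega)

-- increasing enumerations of the coordinates, with sentinels
def iseq (Γ : Finset (ℕ × ℕ)) (s : ℕ) : ℕ :=
  if s = 0 then 0 else nth (Γ.image Prod.fst) (s - 1)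

def jseq (n : ℕ) (Γ : Finset (ℕ × ℕ)) (s : ℕ) : ℕ :=
  if s ≤ Γ.card then nth (Γ.image Prod.snd) (s - 1) else n + 1

lemma iseq_zero (Γ : Finset (ℕ × ℕ)) : iseq Γ 0 = 0 := if_pos rfl

lemma jseq_top {n : ℕ} {Γ : Finset (ℕ × ℕ)} : jseq n Γ (Γ.card + 1) = n + 1 :=
  if_neg (by omega)

-- every element of Γ is (iseq s, jseq s) for its rank s
lemma pairR {n : ℕ} {Γ : Finset (ℕ × ℕ)} (hΓ : IsAC n Γ) :
    ∀ γ ∈ Γ, ∃ s, 1 ≤ s ∧ s ≤ Γ.card ∧ γ.1 = iseq Γ s ∧ γ.2 = jseq n Γ s := by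
  intro γ hγ
  have hI : γ.1 ∈ Γ.image Prod.fst := Finset.mem_image_of_mem _ hγ
  have hJ : γ.2 ∈ Γ.image Prod.snd := Finset.mem_image_of_mem _ hγ
  have hrk : rk (Γ.image Prod.fst) γ.1 < Γ.card := by
    have := rk_lt_card_of_mem _ hI
    rwa [card_image_fst hΓ] at this
  refine ⟨rk (Γ.image Prod.fst) γ.1 + 1, by omega, by omega, ?_, ?_⟩
  · rw [iseq, if_neg (by omega), Nat.add_sub_cancel, nth_rk _ _ hI]
  · rw [jseq, if_pos (by omega), Nat.add_sub_cancel]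
    have hJI : rk (Γ.image Prod.snd) γ.2 = rk (Γ.image Prod.fst) γ.1 := by
      rw [rk_image_snd hΓ, rk_image_fst hΓ]
      congr 1
      apply Finset.filter_congr
      intro γ' hγ'
      constructor
      · intro h
        by_contra hcon
        push_neg at hcon
        have := hΓ.2 γ' hγ' γ hγ ⟨hcon, by omega⟩
        rw [this] at h; omega
      · intro h
        by_contra hcon
        push_neg at hcon
        have := hΓ.2 γ hγ γ' hγ' ⟨by omega, hcon⟩
        rw [this] at h; omega
    rw [← hJI, nth_rk _ _ hJ]

-- each (iseq s, jseq s) for 1 ≤ s ≤ card is in Γ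
lemma pairMem {n : ℕ} {Γ : Finset (ℕ × ℕ)} (hΓ : IsAC n Γ) :
    ∀ s, 1 ≤ s → s ≤ Γ.card → (iseq Γ s, jseq n Γ s) ∈ Γ := by
  intro s h1 h2
  have hcard : s - 1 < (Γ.image Prod.fst).card := by rw [card_image_fst hΓ]; omega
  have hmem : nth (Γ.image Prod.fst) (s - 1) ∈ Γ.image Prod.fst := nth_mem _ _ hcard
  rcases Finset.mem_image.mp hmem with ⟨γ, hγ, hfst⟩
  rcases pairR hΓ γ hγ with ⟨u, hu1, hu2, hu3, hu4⟩
  have hs : u = s := by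
    have e1 : rk (Γ.image Prod.fst) (nth (Γ.image Prod.fst) (s-1)) = s - 1 :=
      rk_nth _ _ hcard
    have e2 : rk (Γ.image Prod.fst) (nth (Γ.image Prod.fst) (u-1)) = u - 1 :=
      rk_nth _ _ (by rw [card_image_fst hΓ]; omega)
    rw [iseq, if_neg (by omega)] at hu3
    rw [← hfst, hu3, e2] at e1
    omega
  rw [hs] at hu3 hu4
  have : γ = (iseq Γ s, jseq n Γ s) := Prod.ext hu3 hu4
  rwa [← this]

lemma iseq_mem {n : ℕ} {Γ : Finset (ℕ × ℕ)} (hΓ : IsAC n Γ) {s : ℕ}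
    (h1 : 1 ≤ s) (h2 : s ≤ Γ.card) : 1 ≤ iseq Γ s ∧ iseq Γ s ≤ n := by
  have := mem_roots.mp (hΓ.1 (pairMem hΓ s h1 h2))
  simp only [] at this
  omega

lemma jseq_mem {n : ℕ} {Γ : Finset (ℕ × ℕ)} (hΓ : IsAC n Γ) {s : ℕ}
    (h1 : 1 ≤ s) (h2 : s ≤ Γ.card) : 1 ≤ jseq n Γ s ∧ jseq n Γ s ≤ n := by
  have := mem_roots.mp (hΓ.1 (pairMem hΓ s h1 h2))
  simp only [] at this
  omega

lemma iseq_le_jseq {n : ℕ} {Γ : Finset (ℕ × ℕ)} (hΓ : IsAC n Γ) {s : ℕ}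
    (h1 : 1 ≤ s) (h2 : s ≤ Γ.card) : iseq Γ s ≤ jseq n Γ s := by
  have := mem_roots.mp (hΓ.1 (pairMem hΓ s h1 h2))
  simp only [] at this
  omega

lemma iseq_lt {n : ℕ} {Γ : Finset (ℕ × ℕ)} (hΓ : IsAC n Γ) {u v : ℕ}
    (h : u < v) (hv : v ≤ Γ.card) : iseq Γ u < iseq Γ v := by
  rcases Nat.eq_zero_or_pos u with rfl | hu
  · rw [iseq_zero]
    exact (iseq_mem hΓ (by omega) hv).1
  · rw [iseq, if_neg (by omega), iseq, if_neg (by omega)]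
    exact nth_strictmono _ (by omega) (by rw [card_image_fst hΓ]; omega)

lemma iseq_mono {n : ℕ} {Γ : Finset (ℕ × ℕ)} (hΓ : IsAC n Γ) {u v : ℕ}
    (h : u ≤ v) (hv : v ≤ Γ.card) : iseq Γ u ≤ iseq Γ v := by
  rcases Nat.eq_or_lt_of_le h with rfl | h
  · exact le_refl _
  · exact le_of_lt (iseq_lt hΓ h hv)

lemma jseq_lt {n : ℕ} {Γ : Finset (ℕ × ℕ)} (hΓ : IsAC n Γ) {u v : ℕ}
    (hu : 1 ≤ u) (h : u < v) (hv : v ≤ Γ.card + 1) : jseq n Γ u < jseq n Γ v := by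
  by_cases hvk : v ≤ Γ.card
  · rw [jseq, if_pos (by omega), jseq, if_pos hvk]
    exact nth_strictmono _ (by omega) (by rw [card_image_snd hΓ]; omega)
  · have hv' : v = Γ.card + 1 := by omega
    rw [hv', jseq_top]
    have := jseq_mem hΓ hu (by omega)
    omega

lemma jseq_mono {n : ℕ} {Γ : Finset (ℕ × ℕ)} (hΓ : IsAC n Γ) {u v : ℕ}
    (hu : 1 ≤ u) (h : u ≤ v) (hv : v ≤ Γ.card + 1) : jseq n Γ u ≤ jseq n Γ v := by
  rcases Nat.eq_or_lt_of_le h with rfl | h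
  · exact le_refl _
  · exact le_of_lt (jseq_lt hΓ hu h hv)

lemma jseq_pos {n : ℕ} {Γ : Finset (ℕ × ℕ)} (hΓ : IsAC n Γ) {s : ℕ}
    (h1 : 1 ≤ s) (h2 : s ≤ Γ.card + 1) : 1 ≤ jseq n Γ s := by
  by_cases h : s ≤ Γ.card
  · exact (jseq_mem hΓ h1 h).1
  · have : s = Γ.card + 1 := by omega
    rw [this, jseq_top]; omega

lemma jseq_le_succ {n : ℕ} {Γ : Finset (ℕ × ℕ)} (hΓ : IsAC n Γ) {s : ℕ}
    (h1 : 1 ≤ s) (h2 : s ≤ Γ.card + 1) : jseq n Γ s ≤ n + 1 := by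
  by_cases h : s ≤ Γ.card
  · have := (jseq_mem hΓ h1 h).2; omega
  · have : s = Γ.card + 1 := by omega
    rw [this, jseq_top]

lemma iseq_lt_jseq {n : ℕ} {Γ : Finset (ℕ × ℕ)} (hΓ : IsAC n Γ) {s : ℕ}
    (h1 : 1 ≤ s) (h2 : s ≤ Γ.card + 1) : iseq Γ (s - 1) < jseq n Γ s := by
  by_cases h : s ≤ Γ.card
  · rcases Nat.eq_or_lt_of_le h1 with h1' | h1'
    · rw [← h1']
      simp only [Nat.sub_self, iseq_zero]
      exact jseq_pos hΓ (by omega) (by omega)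
    · have e1 : iseq Γ (s-1) < iseq Γ s := iseq_lt hΓ (by omega) h
      have e2 : iseq Γ s ≤ jseq n Γ s := iseq_le_jseq hΓ h1 h
      omega
  · have hs : s = Γ.card + 1 := by omega
    subst hs
    rw [jseq_top]
    rcases Nat.eq_zero_or_pos Γ.card with h0 | h0
    · rw [show Γ.card + 1 - 1 = Γ.card from rfl, h0, iseq_zero]; omega
    · have := (iseq_mem hΓ (s := Γ.card) (by omega) (by omega)).2
      rw [show Γ.card + 1 - 1 = Γ.card from rfl]
      omega

-- gap lemmas
lemma iseq_gap {n : ℕ} {Γ : Finset (ℕ × ℕ)} (hΓ : IsAC n Γ) {u v : ℕ}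
    (h : u ≤ v) (hv : v ≤ Γ.card) : iseq Γ u + (v - u) ≤ iseq Γ v :=
  gap_lemma (iseq Γ) u v h (fun w hw hwv => iseq_lt hΓ (by omega) (by omega))

lemma jseq_gap {n : ℕ} {Γ : Finset (ℕ × ℕ)} (hΓ : IsAC n Γ) {u v : ℕ}
    (hu : 1 ≤ u) (h : u ≤ v) (hv : v ≤ Γ.card + 1) :
    jseq n Γ u + (v - u) ≤ jseq n Γ v :=
  gap_lemma (jseq n Γ) u v h (fun w hw hwv => jseq_lt hΓ (by omega) (by omega) (by omega))

-- rank interval characterizations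
lemma iseq_le_iff {n : ℕ} {Γ : Finset (ℕ × ℕ)} (hΓ : IsAC n Γ) {s : ℕ}
    (h1 : 1 ≤ s) (h2 : s ≤ Γ.card + 1) (c : ℕ) :
    iseq Γ (s - 1) ≤ c ↔ s ≤ rk (Γ.image Prod.fst) (c + 1) + 1 := by
  rcases Nat.eq_or_lt_of_le h1 with h1' | h1'
  · rw [← h1']
    simp only [Nat.sub_self, iseq_zero]
    constructor <;> intro <;> omega
  · rw [iseq, if_neg (by omega)]
    have hcard : s - 1 - 1 < (Γ.image Prod.fst).card := by
      rw [card_image_fst hΓ]; omega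
    rw [nth_le_iff _ hcard c]
    omega

lemma jseq_ge_iff {n : ℕ} {Γ : Finset (ℕ × ℕ)} (hΓ : IsAC n Γ) {s : ℕ}
    (h1 : 1 ≤ s) (h2 : s ≤ Γ.card + 1) {a : ℕ} (ha : a ≤ n) :
    a + 1 ≤ jseq n Γ s ↔ rk (Γ.image Prod.snd) (a + 1) + 1 ≤ s := by
  by_cases h : s ≤ Γ.card
  · rw [jseq, if_pos h]
    have hcard : s - 1 < (Γ.image Prod.snd).card := by
      rw [card_image_snd hΓ]; omega
    have := nth_le_iff (Γ.image Prod.snd) hcard a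
    omega
  · have hs : s = Γ.card + 1 := by omega
    subst hs
    rw [jseq_top]
    have : rk (Γ.image Prod.snd) (a + 1) ≤ Γ.card := by
      have := rk_le_card (Γ.image Prod.snd) (a+1)
      rw [card_image_snd hΓ] at this; exact this
    constructor <;> intro <;> omega

-- the explicit formula for the reverse operator
lemma xrev_eq {n : ℕ} {Γ : Finset (ℕ × ℕ)} (hΓ : IsAC n Γ) :
    Xrev n Γ = ((Icc 1 (Γ.card + 1)).filter
      (fun s => iseq Γ (s - 1) + 2 ≤ jseq n Γ s)).image
      (fun s => (iseq Γ (s - 1) + 1, jseq n Γ s - 1)) := by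
  ext w
  rw [mem_xrev_iff]
  simp only [Finset.mem_image, Finset.mem_filter, Finset.mem_Icc]
  constructor
  · rintro ⟨hC, h1, h2⟩
    obtain ⟨hroot, hfree⟩ := hC
    have hr := mem_roots.mp hroot
    have htk : rk (Γ.image Prod.fst) w.1 ≤ Γ.card := by
      have := rk_le_card (Γ.image Prod.fst) w.1
      rwa [card_image_fst hΓ] at this
    set t := rk (Γ.image Prod.fst) w.1 with htdef
    -- if t+1 ≤ card then w.1 ≤ iseq (t+1)
    have hxle : t + 1 ≤ Γ.card → w.1 ≤ iseq Γ (t + 1) := by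
      intro h
      rw [iseq, if_neg (by omega), Nat.add_sub_cancel]
      by_contra hcon
      push_neg at hcon
      have hm : t < (Γ.image Prod.fst).card := by rw [card_image_fst hΓ]; omega
      have := rk_lt_of_mem _ (nth_mem _ t hm) hcon
      rw [rk_nth _ t hm] at this
      omega
    -- Step A
    have stepA : w.2 < jseq n Γ (t + 1) := by
      by_cases h : t + 1 ≤ Γ.card
      · have hmem := pairMem hΓ (t + 1) (by omega) h
        by_contra hcon
        push_neg at hcon
        exact hfree _ hmem ⟨hxle h, hcon⟩
      · rw [jseq, if_neg (by omega)]
        omega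
    -- Step B
    have stepB : jseq n Γ (t + 1) ≤ w.2 + 1 := by
      rw [CC] at h2
      push_neg at h2
      by_cases hy : w.2 + 1 ≤ n
      · have hr2 : (w.1, w.2 + 1) ∈ roots n := mem_roots.mpr ⟨by omega, by omega, by omega⟩
        obtain ⟨γ, hγ, ha, hb⟩ := h2 hr2
        obtain ⟨u, hu1, hu2, hu3, hu4⟩ := pairR hΓ γ hγ
        rw [hu3] at ha
        rw [hu4] at hb
        have hut : t + 1 ≤ u := by
          by_contra hcon
          push_neg at hcon
          have h5 : iseq Γ u < w.1 := by
            rw [iseq, if_neg (by omega)]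
            by_contra hc2
            push_neg at hc2
            have hm : u - 1 < (Γ.image Prod.fst).card := by
              rw [card_image_fst hΓ]; omega
            have := rk_mono (Γ.image Prod.fst) hc2 (p := w.1)
            rw [rk_nth _ (u - 1) hm] at this
            omega
          omega
        have := jseq_mono hΓ (by omega) hut (by omega)
        omega
      · -- w.2 = n, so t must equal card
        have hy2 : w.2 = n := by omega
        have htk2 : t = Γ.card := by
          by_contra hcon
          have hjle := (jseq_mem hΓ (s := t + 1) (by omega) (by omega)).2
          omega
        rw [jseq, if_neg (by omega)]
        omega
    have e2 : jseq n Γ (t + 1) = w.2 + 1 := by omega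
    -- Step C
    have stepC : iseq Γ t = w.1 - 1 := by
      rw [CC] at h1
      push_neg at h1
      by_cases hx1 : w.1 = 1
      · have ht0 : t = 0 := by
          have : (Γ.image Prod.fst).filter (· < 1) = ∅ := by
            rw [Finset.filter_eq_empty_iff]
            intro z hz
            have := Finset.mem_Icc.mp (image_fst_subset hΓ hz)
            omega
          rw [htdef, hx1, rk, this, Finset.card_empty]
        rw [ht0, iseq_zero, hx1]
      · have hr1 : (w.1 - 1, w.2) ∈ roots n := mem_roots.mpr ⟨by omega, by omega, by omega⟩
        obtain ⟨γ, hγ, ha, hb⟩ := h1 hr1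
        obtain ⟨u, hu1, hu2, hu3, hu4⟩ := pairR hΓ γ hγ
        rw [hu3] at ha
        rw [hu4] at hb
        have hut : u ≤ t := by
          by_contra hcon
          push_neg at hcon
          have := jseq_mono hΓ (u := t + 1) (v := u) (by omega) (by omega) (by omega)
          omega
        have h6 : iseq Γ t ≤ w.1 - 1 := by
          rcases Nat.eq_zero_or_pos t with ht0 | ht0
          · rw [ht0, iseq_zero]; omega
          · have := (iseq_le_iff hΓ (s := t + 1) (by omega) (by omega) (w.1 - 1)).mpr
              (by rw [show w.1 - 1 + 1 = w.1 by omega, ← htdef])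
            rw [Nat.add_sub_cancel] at this
            exact this
        have h7 : iseq Γ u ≤ iseq Γ t := iseq_mono hΓ hut (by omega)
        omega
    refine ⟨t + 1, ⟨⟨by omega, by omega⟩, ?_⟩, ?_⟩
    · rw [Nat.add_sub_cancel, stepC, e2]
      omega
    · rw [Nat.add_sub_cancel, stepC, e2]
      have : (w.1 - 1 + 1, w.2 + 1 - 1) = (w.1, w.2) := by
        have h1 : w.1 - 1 + 1 = w.1 := by omega
        have h2 : w.2 + 1 - 1 = w.2 := by omega
        rw [h1, h2]
      rw [this]
  · rintro ⟨s, ⟨⟨hs1, hs2⟩, hval⟩, rfl⟩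
    have hij : iseq Γ (s - 1) < jseq n Γ s := iseq_lt_jseq hΓ hs1 hs2
    have hjle : jseq n Γ s ≤ n + 1 := jseq_le_succ hΓ hs1 hs2
    have hroot : (iseq Γ (s - 1) + 1, jseq n Γ s - 1) ∈ roots n :=
      mem_roots.mpr ⟨by omega, by omega, by omega⟩
    refine ⟨⟨hroot, ?_⟩, ?_, ?_⟩
    · -- no γ below it
      rintro γ hγ ⟨ha, hb⟩
      obtain ⟨u, hu1, hu2, hu3, hu4⟩ := pairR hΓ γ hγ
      rw [hu3] at ha
      rw [hu4] at hb
      by_cases hu : u ≤ s - 1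
      · have := iseq_mono hΓ hu (by omega)
        simp only [] at ha
        omega
      · have := jseq_mono hΓ hs1 (show s ≤ u by omega) (by omega)
        simp only [] at hb
        omega
    · -- ¬ CC (x-1, y)
      rintro ⟨hrts, hfree⟩
      rcases Nat.eq_or_lt_of_le hs1 with hs1' | hs1'
      · rw [← hs1'] at hrts
        simp only [Nat.sub_self, iseq_zero] at hrts
        have := mem_roots.mp hrts
        simp only [] at this
        omega
      · have hmem := pairMem hΓ (s - 1) (by omega) (by omega)
        apply hfree _ hmem
        constructor
        · show (iseq Γ (s - 1) + 1, jseq n Γ s - 1).1 - 1 ≤ iseq Γ (s - 1)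
          simp only [Nat.add_sub_cancel]
          exact le_refl _
        · show jseq n Γ (s - 1) ≤ (iseq Γ (s - 1) + 1, jseq n Γ s - 1).2
          have := jseq_lt hΓ (u := s - 1) (v := s) (by omega) (by omega) (by omega)
          simp only []
          omega
    · -- ¬ CC (x, y+1)
      rintro ⟨hrts, hfree⟩
      by_cases hsk : s ≤ Γ.card
      · have hmem := pairMem hΓ s hs1 hsk
        apply hfree _ hmem
        have hlt : iseq Γ (s - 1) < iseq Γ s := iseq_lt hΓ (by omega) hsk
        have hjpos : 1 ≤ jseq n Γ s := jseq_pos hΓ hs1 hs2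
        exact ⟨by simp only []; omega, by simp only []; omega⟩
      · have hs' : s = Γ.card + 1 := by omega
        rw [hs', jseq_top] at hrts
        have := mem_roots.mp hrts
        simp only [] at this
        omega

lemma rle_def (p q : ℕ × ℕ) : rle p q ↔ q.1 ≤ p.1 ∧ p.2 ≤ q.2 := Iff.rfl

lemma xrev_isAC (n : ℕ) (Γ : Finset (ℕ × ℕ)) : IsAC n (Xrev n Γ) := by
  constructor
  · intro w hw
    rcases Finset.mem_filter.mp hw with ⟨h1, _⟩
    exact (Finset.mem_sdiff.mp h1).1
  · intro p hp q hq hpq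
    rcases Finset.mem_filter.mp hp with ⟨h1, h2⟩
    exact (h2 q (Finset.mem_filter.mp hq).1 hpq).symm

-- counting the first coordinates of Xrev Γ
lemma rk_fst_xrev {n : ℕ} {Γ : Finset (ℕ × ℕ)} (hΓ : IsAC n Γ) (c : ℕ) :
    rk ((Xrev n Γ).image Prod.fst) c =
      (((Icc 1 (Γ.card + 1)).filter (fun s => iseq Γ (s - 1) + 2 ≤ jseq n Γ s)).filter
        (fun s => iseq Γ (s - 1) + 1 < c)).card := by
  rw [xrev_eq hΓ, Finset.image_image]
  rw [rk, Finset.filter_image]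
  apply Finset.card_image_of_injOn
  intro s hs s' hs' h
  simp only [Finset.coe_filter, Set.mem_setOf_eq, Finset.mem_filter, Finset.mem_Icc] at hs hs'
  simp only [Function.comp_apply] at h
  by_contra hne
  rcases Nat.lt_or_ge s s' with hlt | hge
  · have := iseq_lt hΓ (show s - 1 < s' - 1 by omega) (show s' - 1 ≤ Γ.card by omega)
    omega
  · have := iseq_lt hΓ (show s' - 1 < s - 1 by omega) (show s - 1 ≤ Γ.card by omega)
    omega

lemma rk_snd_xrev {n : ℕ} {Γ : Finset (ℕ × ℕ)} (hΓ : IsAC n Γ) (c : ℕ) :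
    rk ((Xrev n Γ).image Prod.snd) c =
      (((Icc 1 (Γ.card + 1)).filter (fun s => iseq Γ (s - 1) + 2 ≤ jseq n Γ s)).filter
        (fun s => jseq n Γ s - 1 < c)).card := by
  rw [xrev_eq hΓ, Finset.image_image]
  rw [rk, Finset.filter_image]
  apply Finset.card_image_of_injOn
  intro s hs s' hs' h
  simp only [Finset.coe_filter, Set.mem_setOf_eq, Finset.mem_filter, Finset.mem_Icc] at hs hs'
  simp only [Function.comp_apply] at h
  by_contra hne
  rcases Nat.lt_or_ge s s' with hlt | hge
  · have h1 := jseq_lt hΓ (show 1 ≤ s by omega) hlt (show s' ≤ Γ.card + 1 by omega)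
    have h2 := jseq_pos hΓ (show 1 ≤ s by omega) (show s ≤ Γ.card + 1 by omega)
    omega
  · have h1 := jseq_lt hΓ (show 1 ≤ s' by omega) (show s' < s by omega) (show s ≤ Γ.card + 1 by omega)
    have h2 := jseq_pos hΓ (show 1 ≤ s' by omega) (show s' ≤ Γ.card + 1 by omega)
    omega

-- the core scalar equivalence
lemma core_scalar {n : ℕ} {Γ : Finset (ℕ × ℕ)} (hΓ : IsAC n Γ) {a b : ℕ}
    (ha : 1 ≤ a) (hab : a ≤ b) (hb : b ≤ n) :
    (rk (Icc 1 n \ (Xrev n Γ).image Prod.snd) a <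
      rk (Icc 1 n \ (Xrev n Γ).image Prod.fst) (b + 1)) ↔
    (rk (Icc 1 n \ Γ.image Prod.snd) (a + 1) ≤ rk (Icc 1 n \ Γ.image Prod.fst) b) := by
  have hΔ : IsAC n (Xrev n Γ) := xrev_isAC n Γ
  set k := Γ.card with hk
  set κ := rk (Γ.image Prod.fst) b with hκ
  set lam := rk (Γ.image Prod.snd) (a + 1) with hlam
  have hκk : κ ≤ k := by
    rw [hκ, hk]
    have := rk_le_card (Γ.image Prod.fst) b
    rw [card_image_fst hΓ] at this; exact this
  have hlamk : lam ≤ k := by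
    rw [hlam, hk]
    have := rk_le_card (Γ.image Prod.snd) (a + 1)
    rw [card_image_snd hΓ] at this; exact this
  set Sval := (Icc 1 (k + 1)).filter (fun s => iseq Γ (s - 1) + 2 ≤ jseq n Γ s) with hSval
  set W := (Icc 1 (k + 1)).filter
    (fun s => iseq Γ (s - 1) ≤ b - 1 ∧ a + 1 ≤ jseq n Γ s) with hW
  -- partition of the α-count
  have hα : (Sval.filter (fun s => iseq Γ (s - 1) + 1 < b + 1)).card =
      (Sval.filter (fun s => jseq n Γ s - 1 < a)).card +
      (Sval.filter (fun s => iseq Γ (s - 1) ≤ b - 1 ∧ a + 1 ≤ jseq n Γ s)).card := by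
    have hsplit := Finset.card_filter_add_card_filter_not
      (s := Sval.filter (fun s => iseq Γ (s - 1) + 1 < b + 1))
      (p := fun s => jseq n Γ s - 1 < a)
    have e1 : (Sval.filter (fun s => iseq Γ (s - 1) + 1 < b + 1)).filter
        (fun s => jseq n Γ s - 1 < a) = Sval.filter (fun s => jseq n Γ s - 1 < a) := by
      rw [Finset.filter_filter, Finset.filter_filter, Finset.filter_filter]
      apply Finset.filter_congr
      intro s hs
      rcases Finset.mem_Icc.mp hs with ⟨hs1, hs2⟩
      have hpos := jseq_pos hΓ hs1 hs2
      constructor <;> intro <;> omega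
    have e2 : (Sval.filter (fun s => iseq Γ (s - 1) + 1 < b + 1)).filter
        (fun s => ¬(jseq n Γ s - 1 < a)) =
        Sval.filter (fun s => iseq Γ (s - 1) ≤ b - 1 ∧ a + 1 ≤ jseq n Γ s) := by
      rw [Finset.filter_filter, Finset.filter_filter, Finset.filter_filter]
      apply Finset.filter_congr
      intro s hs
      rcases Finset.mem_Icc.mp hs with ⟨hs1, hs2⟩
      have hpos := jseq_pos hΓ hs1 hs2
      constructor <;> intro <;> omega
    rw [e1, e2] at hsplit
    omega
  -- W is the interval [lam+1, κ+1]
  have hWIcc : W = Icc (lam + 1) (κ + 1) := by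
    rw [hW]
    ext s
    simp only [Finset.mem_filter, Finset.mem_Icc]
    by_cases hs : 1 ≤ s ∧ s ≤ k + 1
    · have e1 := iseq_le_iff hΓ hs.1 hs.2 (b - 1)
      rw [show b - 1 + 1 = b by omega] at e1
      have e2 := jseq_ge_iff hΓ hs.1 hs.2 (show a ≤ n by omega)
      rw [← hκ] at e1
      rw [← hlam] at e2
      constructor
      · rintro ⟨_, c1, c2⟩
        exact ⟨by omega, by omega⟩
      · rintro ⟨c1, c2⟩
        refine ⟨⟨hs.1, hs.2⟩, ?_, ?_⟩
        · rw [e1]; omega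
        · rw [e2]; omega
    · constructor
      · rintro ⟨⟨c1, c2⟩, _⟩
        exact absurd ⟨c1, c2⟩ hs
      · rintro ⟨c1, c2⟩
        exact absurd ⟨by omega, by omega⟩ hs
  have hWcard : W.card = κ + 1 - lam := by
    rw [hWIcc, Nat.card_Icc]; omega
  -- split W into the valid and degenerate parts
  have hWsplit : W.card =
      (Sval.filter (fun s => iseq Γ (s - 1) ≤ b - 1 ∧ a + 1 ≤ jseq n Γ s)).card +
      (W.filter (fun s => ¬(iseq Γ (s - 1) + 2 ≤ jseq n Γ s))).card := by
    have hsplit := Finset.card_filter_add_card_filter_not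
      (s := W) (p := fun s => iseq Γ (s - 1) + 2 ≤ jseq n Γ s)
    have e1 : W.filter (fun s => iseq Γ (s - 1) + 2 ≤ jseq n Γ s) =
        Sval.filter (fun s => iseq Γ (s - 1) ≤ b - 1 ∧ a + 1 ≤ jseq n Γ s) := by
      rw [hW, hSval, Finset.filter_filter, Finset.filter_filter]
      apply Finset.filter_congr
      intro s hs
      constructor <;> intro h <;> exact ⟨h.2, h.1⟩
    rw [e1] at hsplit
    omega
  -- degenerate part forces the inequality
  have hkey : (W.filter (fun s => ¬(iseq Γ (s - 1) + 2 ≤ jseq n Γ s))).card ≠ 0 →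
      a + κ + 1 ≤ b + lam := by
    intro hne
    obtain ⟨s, hs⟩ := Finset.card_ne_zero.mp hne |>.exists_mem
    rcases Finset.mem_filter.mp hs with ⟨hsW, hdeg⟩
    have hsIcc : s ∈ Icc (lam + 1) (κ + 1) := hWIcc ▸ hsW
    rcases Finset.mem_Icc.mp hsIcc with ⟨hs1, hs2⟩
    have hsk : s ≤ k + 1 := by omega
    have g1 : jseq n Γ (lam + 1) + (s - (lam + 1)) ≤ jseq n Γ s :=
      jseq_gap hΓ (by omega) hs1 hsk
    have g2 : a + 1 ≤ jseq n Γ (lam + 1) :=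
      (jseq_ge_iff hΓ (by omega) (by omega) (show a ≤ n by omega)).mpr (by omega)
    have g3 : iseq Γ (s - 1) + (κ - (s - 1)) ≤ iseq Γ κ :=
      iseq_gap hΓ (by omega) hκk
    have g4 : iseq Γ κ ≤ b - 1 := by
      have := (iseq_le_iff hΓ (s := κ + 1) (by omega) (by omega) (b - 1)).mpr
        (by rw [show b - 1 + 1 = b by omega])
      rwa [Nat.add_sub_cancel] at this
    have g5 : jseq n Γ s ≤ iseq Γ (s - 1) + 1 := by omega
    omega
  -- complement count equations
  have c1 : rk (Icc 1 n \ (Xrev n Γ).image Prod.snd) a + rk ((Xrev n Γ).image Prod.snd) a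
      = a - 1 := rk_compl n (image_snd_subset hΔ) a (by omega)
  have c2 : rk (Icc 1 n \ (Xrev n Γ).image Prod.fst) (b + 1) +
      rk ((Xrev n Γ).image Prod.fst) (b + 1) = b := by
    have := rk_compl n (image_fst_subset hΔ) (b + 1) (by omega)
    omega
  have c3 : rk (Icc 1 n \ Γ.image Prod.snd) (a + 1) + lam = a := by
    have := rk_compl n (image_snd_subset hΓ) (a + 1) (by omega)
    omega
  have c4 : rk (Icc 1 n \ Γ.image Prod.fst) b + κ = b - 1 :=
    rk_compl n (image_fst_subset hΓ) b (by omega)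
  have c5 : rk ((Xrev n Γ).image Prod.fst) (b + 1) =
      (Sval.filter (fun s => iseq Γ (s - 1) + 1 < b + 1)).card := rk_fst_xrev hΓ (b + 1)
  have c6 : rk ((Xrev n Γ).image Prod.snd) a =
      (Sval.filter (fun s => jseq n Γ s - 1 < a)).card := rk_snd_xrev hΓ a
  rcases Nat.eq_zero_or_pos (W.filter (fun s => ¬(iseq Γ (s - 1) + 2 ≤ jseq n Γ s))).card
    with hF | hF
  · omega
  · have := hkey (by omega)
    omega

-- maxima of the down-set of an antichain recover the antichain
lemma maxOf_down {n : ℕ} {Sig : Finset (ℕ × ℕ)} (hSig : IsAC n Sig) :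
    maxOf ((roots n).filter (fun w => ∃ σ ∈ Sig, rle w σ)) = Sig := by
  ext w
  rw [maxOf, Finset.mem_filter]
  constructor
  · rintro ⟨hw, hmax⟩
    rcases Finset.mem_filter.mp hw with ⟨hwr, σ, hσ, hwσ⟩
    have hσf : σ ∈ (roots n).filter (fun w => ∃ σ ∈ Sig, rle w σ) :=
      Finset.mem_filter.mpr ⟨hSig.1 hσ, σ, hσ, rle_refl σ⟩
    have := hmax σ hσf hwσ
    rwa [← this]
  · intro hσ
    refine ⟨Finset.mem_filter.mpr ⟨hSig.1 hσ, w, hσ, rle_refl w⟩, ?_⟩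
    intro y hy hwy
    rcases Finset.mem_filter.mp hy with ⟨hyr, σ', hσ', hyσ'⟩
    have he : w = σ' := hSig.2 w hσ σ' hσ' (rle_trans hwy hyσ')
    subst he
    exact rle_antisymm hyσ' hwy

/-- For every antichain `Γ` in `Δ⁺(A_n)`, `𝔛(Γ)* = 𝔛⁻¹(Γ*)`; equivalently
(applying `𝔛`), `𝔛(𝔛(Γ)*) = Γ*`, i.e. `𝔛⁻¹ = ∗ ∘ 𝔛 ∘ ∗`. -/
theorem stmt13 (n : ℕ) (hn : 1 ≤ n) (Γ : Finset (ℕ × ℕ)) (hΓ : IsAC n Γ) :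
    Xrev n (dualAC n (Xrev n Γ)) = dualAC n Γ := by
  have hΔ : IsAC n (Xrev n Γ) := xrev_isAC n Γ
  have hdΓ : IsAC n (dualAC n Γ) := dual_isAC hΓ
  have hcΔ := card_compl_eq hΔ
  have hcΓ := card_compl_eq hΓ
  have key : roots n \ upIdeal n (dualAC n (Xrev n Γ)) =
      (roots n).filter (fun w => ∃ σ ∈ dualAC n Γ, rle w σ) := by
    ext w
    rw [Finset.mem_sdiff, Finset.mem_filter, upIdeal, Finset.mem_filter]
    by_cases hw : w ∈ roots n
    · have hr := mem_roots.mp hw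
      have e1 : (∃ δ ∈ dualAC n (Xrev n Γ), rle δ w) ↔
          rk (Icc 1 n \ (Xrev n Γ).image Prod.snd) w.1 <
          rk (Icc 1 n \ (Xrev n Γ).image Prod.fst) (w.2 + 1) :=
        exists_pair_up hcΔ (mem_dualAC hcΔ) w.1 w.2
      have e2 : (∃ σ ∈ dualAC n Γ, rle w σ) ↔
          rk (Icc 1 n \ Γ.image Prod.fst) w.2 <
          rk (Icc 1 n \ Γ.image Prod.snd) (w.1 + 1) :=
        exists_pair_down hcΓ (mem_dualAC hcΓ) w.1 w.2
      have hcore := core_scalar hΓ (a := w.1) (b := w.2) (by omega) (by omega) (by omega)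
      constructor
      · rintro ⟨_, hna⟩
        have h1 : ¬ (∃ δ ∈ dualAC n (Xrev n Γ), rle δ w) := fun hex => hna ⟨hw, hex⟩
        refine ⟨hw, ?_⟩
        rw [e2]
        rw [e1] at h1
        by_contra hcon
        push_neg at hcon
        exact h1 (hcore.mpr (by omega))
      · rintro ⟨_, hex⟩
        refine ⟨hw, ?_⟩
        rintro ⟨_, hex2⟩
        rw [e2] at hex
        rw [e1] at hex2
        have := hcore.mp hex2
        omega
    · exact ⟨fun h => absurd h.1 hw, fun h => absurd h.1 hw⟩
  rw [Xrev, key, maxOf_down hdΓ]
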